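/- For all nonnegative integers m, n and complex z₁, z₂, q: z₁^m z₂^n = Σ_{k=0}^{min(m,n)} [m choose k]_q [n choose k]_q (q;q)_k H_{m-k,n-k}(z₁, z₂ | q). -/
import Mathlib


open Finset Filter

noncomputable def qPoch (a q : ℂ) (n : ℕ) : ℂ :=
  ∏ j ∈ Finset.range n, (1 - a * q ^ j)

noncomputable def qbinom (q : ℂ) : ℕ → ℕ → ℂ
  | _, 0 => 1
  | 0, _ + 1 => 0
  | m + 1, k + 1 => qbinom q m k + q ^ (k + 1) * qbinom q m (k + 1)

/-- The first q-analogue of the 2D Hermite polynomials. -/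
noncomputable def H2D (q z1 z2 : ℂ) (m n : ℕ) : ℂ :=
  ∑ k ∈ Finset.range (min m n + 1),
    qbinom q m k * qbinom q n k * (-1) ^ k * q ^ (k.choose 2) * qPoch q q k *
      z1 ^ (m - k) * z2 ^ (n - k)

/-- The second q-analogue of the 2D Hermite polynomials. -/
noncomputable def h2D (q z1 z2 : ℂ) (m n : ℕ) : ℂ :=
  ∑ j ∈ Finset.range (min m n + 1),
    qbinom q m j * qbinom q n j * q ^ ((m - j) * (n - j)) * (-1) ^ j * qPoch q q j *
      z1 ^ (m - j) * z2 ^ (n - j)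

/-- The q-2D ultraspherical (q-disk / q-Zernike) polynomials. -/
noncomputable def p2D (q b z1 z2 : ℂ) (m n : ℕ) : ℂ :=
  ∑ k ∈ Finset.range (min m n + 1),
    qbinom q m k * qbinom q n k * (-1) ^ k * q ^ (k.choose 2) * qPoch q q k *
      qPoch (b * q) q (m + n - k) * z1 ^ (m - k) * z2 ^ (n - k)

/-- The infinite q-Pochhammer product (a;q)_∞. -/
noncomputable def qPochInf (a q : ℂ) : ℂ :=
  ∏' j : ℕ, (1 - a * q ^ j)

section Aux

variable (q : ℂ)

lemma qPoch_succ' (a : ℂ) (n : ℕ) : qPoch a q (n+1) = qPoch a q n * (1 - a * q^n) :=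
  Finset.prod_range_succ _ _

lemma qPoch_zero' (a : ℂ) : qPoch a q 0 = 1 := rfl

lemma qbinom_zero (m : ℕ) : qbinom q m 0 = 1 := by cases m <;> rfl

lemma pascal (m k : ℕ) :
    qbinom q (m+1) (k+1) = qbinom q m k + q^(k+1) * qbinom q m (k+1) := rfl

lemma qbinom_of_lt : ∀ m k, m < k → qbinom q m k = 0 := by
  intro m
  induction m with
  | zero => intro k h; match k, h with | k+1, _ => rfl
  | succ m ih =>
    intro k h
    match k, h with
    | k+1, h => rw [pascal, ih k (by omega), ih (k+1) (by omega)]; ring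

lemma qbinom_self : ∀ m, qbinom q m m = 1 := by
  intro m
  induction m with
  | zero => rfl
  | succ m ih => rw [pascal, ih, qbinom_of_lt q m (m+1) (by omega)]; ring

lemma choose_two_succ (d : ℕ) : (d+1).choose 2 = d.choose 2 + d := by
  simp [Nat.choose_succ_succ, Nat.choose_one_right, Nat.add_comm]

lemma qbinom_tri : ∀ m k j : ℕ,
    qbinom q m k * qbinom q (m - k) j = qbinom q m (k + j) * qbinom q (k + j) k := by
  intro m
  induction m with
  | zero =>
    intro k j
    cases k with
    | zero => simp [qbinom_zero]
    | succ k =>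
      rw [qbinom_of_lt q 0 (k+1) (by omega), qbinom_of_lt q 0 (k+1+j) (by omega)]
      ring
  | succ m ih =>
    intro k j
    cases k with
    | zero => simp [qbinom_zero]
    | succ k =>
      cases j with
      | zero => simp [qbinom_zero, qbinom_self]
      | succ j =>
        rcases Nat.lt_or_ge k m with h | h
        · obtain ⟨t, rfl⟩ : ∃ t, m = k + t + 1 := ⟨m - k - 1, by omega⟩
          have h1 := ih k (j+1)
          have h2 := ih (k+1) j
          have h3 := ih (k+1) (j+1)
          rw [show k + t + 1 - k = t + 1 by omega] at h1
          rw [show k + t + 1 - (k+1) = t by omega] at h2 h3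
          rw [show k + (j+1) = k + j + 1 by omega] at h1
          rw [show (k+1) + j = k + j + 1 by omega] at h2
          rw [show (k+1) + (j+1) = k + j + 1 + 1 by omega] at h3
          rw [pascal q t j] at h1
          rw [pascal q (k+j+1) k] at h3
          rw [show k + t + 1 + 1 - (k + 1) = t + 1 by omega,
              show (k+1) + (j+1) = k + j + 1 + 1 by omega,
              pascal q (k+t+1) k, pascal q t j, pascal q (k+j+1) k,
              pascal q (k+t+1) (k+j+1)]
          linear_combination h1 + q^(k+1) * h2 + q^(k+1) * q^(j+1) * h3
        · rw [qbinom_of_lt q (m+1) (k+1+(j+1)) (by omega)]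
          rcases Nat.eq_or_lt_of_le h with rfl | h'
          · rw [show m + 1 - (m + 1) = 0 by omega, qbinom_of_lt q 0 (j+1) (by omega)]
            ring
          · rw [qbinom_of_lt q (m+1) (k+1) (by omega)]; ring

lemma qbinom_qPoch : ∀ m k, k ≤ m →
    qbinom q m k * qPoch q q k * qPoch q q (m - k) = qPoch q q m := by
  intro m
  induction m with
  | zero =>
    intro k hk
    interval_cases k
    simp [qbinom_zero, qPoch_zero']
  | succ m ih =>
    intro k hk
    cases k with
    | zero => simp [qbinom_zero, qPoch_zero']
    | succ k =>
      rcases Nat.lt_or_ge k m with h | h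
      · obtain ⟨t, rfl⟩ : ∃ t, m = k + t + 1 := ⟨m - k - 1, by omega⟩
        have h1 := ih k (by omega)
        have h2 := ih (k+1) (by omega)
        rw [show k + t + 1 - k = t + 1 by omega] at h1
        rw [show k + t + 1 - (k+1) = t by omega] at h2
        rw [show k + t + 1 + 1 - (k + 1) = t + 1 by omega,
            pascal q (k+t+1) k, qPoch_succ' q q k, qPoch_succ' q q t,
            qPoch_succ' q q (k+t+1)]
        rw [qPoch_succ' q q k] at h2
        rw [qPoch_succ' q q t] at h1
        linear_combination (1 - q * q^k) * h1 + q^(k+1) * (1 - q * q^t) * h2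
      · obtain rfl : k = m := by omega
        rw [qbinom_self, show k + 1 - (k+1) = 0 by omega, qPoch_zero']
        ring

lemma alt_sum : ∀ s : ℕ,
    ∑ k ∈ range (s+1), qbinom q s k * (-1)^(s-k) * q^((s-k).choose 2)
      = ∏ i ∈ range s, (1 - q^i) := by
  intro s
  induction s with
  | zero => simp [qbinom_zero]
  | succ s ih =>
    rw [Finset.sum_range_succ']
    have e1 : ∀ k ∈ range (s+1),
        qbinom q (s+1) (k+1) * (-1)^(s+1-(k+1)) * q^((s+1-(k+1)).choose 2)
        = qbinom q s k * (-1)^(s-k) * q^((s-k).choose 2)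
          + q^(k+1) * qbinom q s (k+1) * (-1)^(s-k) * q^((s-k).choose 2) := by
      intro k _
      rw [Nat.succ_sub_succ, pascal]; ring
    rw [Finset.sum_congr rfl e1, Finset.sum_add_distrib, ih]
    have e2 : (∑ k ∈ range (s+1), q^(k+1) * qbinom q s (k+1) * (-1)^(s-k) * q^((s-k).choose 2))
        + qbinom q (s+1) 0 * (-1)^(s+1-0) * q^((s+1-0).choose 2)
        = -(q^s) * ∑ k ∈ range (s+1), qbinom q s k * (-1)^(s-k) * q^((s-k).choose 2) := by
      rw [Finset.mul_sum]
      conv_lhs => rw [Finset.sum_range_succ]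
      conv_rhs => rw [Finset.sum_range_succ']
      have e3 : ∀ k ∈ range s,
          q^(k+1) * qbinom q s (k+1) * (-1)^(s-k) * q^((s-k).choose 2)
          = -(q^s) * (qbinom q s (k+1) * (-1)^(s-(k+1)) * q^((s-(k+1)).choose 2)) := by
        intro k hk
        rw [Finset.mem_range] at hk
        obtain ⟨d, rfl⟩ : ∃ d, s = k + d + 1 := ⟨s - k - 1, by omega⟩
        rw [show k + d + 1 - k = d + 1 by omega, show k + d + 1 - (k+1) = d by omega,
            choose_two_succ]
        rw [pow_add, pow_add]
        ring
      rw [Finset.sum_congr rfl e3, qbinom_of_lt q s (s+1) (by omega),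
          qbinom_zero, qbinom_zero, Nat.sub_zero, Nat.sub_zero,
          choose_two_succ, pow_add]
      ring
    rw [add_assoc, e2, ih, Finset.prod_range_succ]
    ring

lemma sum_tri (N : ℕ) (f : ℕ → ℕ → ℂ) :
    ∑ k ∈ range N, ∑ j ∈ range (N - k), f k j
      = ∑ s ∈ range N, ∑ k ∈ range (s+1), f k (s-k) := by
  induction N with
  | zero => simp
  | succ N ih =>
    have h1 : ∀ k ∈ range (N+1), (∑ j ∈ range (N+1-k), f k j)
        = (∑ j ∈ range (N-k), f k j) + f k (N-k) := by
      intro k hk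
      rw [Finset.mem_range] at hk
      rw [show N+1-k = (N-k)+1 by omega, Finset.sum_range_succ]
    rw [Finset.sum_congr rfl h1, Finset.sum_add_distrib,
        Finset.sum_range_succ (fun k => ∑ j ∈ range (N-k), f k j)]
    simp only [Nat.sub_self, Finset.range_zero, Finset.sum_empty, add_zero]
    rw [ih, Finset.sum_range_succ (fun s => ∑ k ∈ range (s+1), f k (s-k)),
        Finset.sum_range_succ (fun k => f k (N-k))]

end Aux

theorem stmt13 (m n : ℕ) (z1 z2 q : ℂ) :
    z1 ^ m * z2 ^ n =
      ∑ k ∈ Finset.range (min m n + 1),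
        qbinom q m k * qbinom q n k * qPoch q q k * H2D q z1 z2 (m - k) (n - k) := by
  have hm : min m n ≤ m := Nat.min_le_left _ _
  have hn : min m n ≤ n := Nat.min_le_right _ _
  calc z1 ^ m * z2 ^ n
      = ∑ s ∈ range (min m n + 1),
          (qbinom q m s * qbinom q n s * qPoch q q s * z1^(m-s) * z2^(n-s)) *
            ∏ i ∈ range s, (1 - q^i) := by
        have hz : ∀ s : ℕ, (∏ i ∈ range (s+1), (1 - q^i)) = (0:ℂ) := fun s =>
          Finset.prod_eq_zero (Finset.mem_range.mpr (Nat.succ_pos s)) (by simp)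
        rw [Finset.sum_range_succ']
        simp [hz, qbinom_zero, qPoch_zero']
    _ = ∑ s ∈ range (min m n + 1), ∑ k ∈ range (s+1),
          qbinom q m k * qbinom q n k * qPoch q q k *
            (qbinom q (m-k) (s-k) * qbinom q (n-k) (s-k) * (-1)^(s-k) * q^((s-k).choose 2) *
              qPoch q q (s-k) * z1^(m-k-(s-k)) * z2^(n-k-(s-k))) := by
        refine Finset.sum_congr rfl fun s hs => ?_
        rw [Finset.mem_range] at hs
        have key : ∀ k ∈ range (s+1),
            qbinom q m k * qbinom q n k * qPoch q q k *
              (qbinom q (m-k) (s-k) * qbinom q (n-k) (s-k) * (-1)^(s-k) * q^((s-k).choose 2) *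
                qPoch q q (s-k) * z1^(m-k-(s-k)) * z2^(n-k-(s-k)))
            = (qbinom q m s * qbinom q n s * qPoch q q s * z1^(m-s) * z2^(n-s)) *
                (qbinom q s k * (-1)^(s-k) * q^((s-k).choose 2)) := by
          intro k hk
          rw [Finset.mem_range] at hk
          have t1 := qbinom_tri q m k (s-k)
          have t2 := qbinom_tri q n k (s-k)
          have t3 := qbinom_qPoch q s k (by omega)
          rw [show k + (s-k) = s by omega] at t1 t2
          rw [show m - k - (s-k) = m - s by omega, show n - k - (s-k) = n - s by omega]
          linear_combination
            (qbinom q n k * qbinom q (n-k) (s-k) * qPoch q q k * qPoch q q (s-k) *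
              (-1)^(s-k) * q^((s-k).choose 2) * z1^(m-s) * z2^(n-s)) * t1
            + (qbinom q m s * qbinom q s k * qPoch q q k * qPoch q q (s-k) *
              (-1)^(s-k) * q^((s-k).choose 2) * z1^(m-s) * z2^(n-s)) * t2
            + (qbinom q m s * qbinom q n s * qbinom q s k *
              (-1)^(s-k) * q^((s-k).choose 2) * z1^(m-s) * z2^(n-s)) * t3
        rw [Finset.sum_congr rfl key, ← Finset.mul_sum, alt_sum]
    _ = ∑ k ∈ range (min m n + 1), ∑ j ∈ range ((min m n + 1) - k),
          qbinom q m k * qbinom q n k * qPoch q q k *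
            (qbinom q (m-k) j * qbinom q (n-k) j * (-1)^j * q^(j.choose 2) *
              qPoch q q j * z1^(m-k-j) * z2^(n-k-j)) :=
        (sum_tri (min m n + 1) fun k j =>
          qbinom q m k * qbinom q n k * qPoch q q k *
            (qbinom q (m-k) j * qbinom q (n-k) j * (-1)^j * q^(j.choose 2) *
              qPoch q q j * z1^(m-k-j) * z2^(n-k-j))).symm
    _ = ∑ k ∈ Finset.range (min m n + 1),
          qbinom q m k * qbinom q n k * qPoch q q k * H2D q z1 z2 (m - k) (n - k) := by
        refine Finset.sum_congr rfl fun k hk => ?_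
        rw [Finset.mem_range] at hk
        rw [show min m n + 1 - k = min (m-k) (n-k) + 1 by omega, H2D, Finset.mul_sum]
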